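/- Let L be a bounded lattice with canonical polarity (𝓕_L, 𝓘_L, ⋔). Call a filter F ∈ 𝓕_L D-maximal (for an ideal D ∈ 𝓘_L) if F is maximal with respect to inclusion among filters disjoint from D, and i-maximal if it is D-maximal for some ideal D. Let P = (X, Y, R) be a polarity and (α, β) a bounded morphism of polarities from P to (𝓕_L, 𝓘_L, ⋔) such that every i-maximal filter of L lies in the image of α : X → 𝓕_L. Then the map A ↦ α⁻¹A, from stable subsets of 𝓕_L (in the canonical polarity) to subsets of X, is injective. -/
import Mathlib


/-- The right polar `ρ_R A = {y ∈ Y : ∀ x ∈ A, x R y}`. -/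
def rpolar {X Y : Type*} (R : X → Y → Prop) (A : Set X) : Set Y := {y | ∀ x ∈ A, R x y}

/-- The left polar `λ_R B = {x ∈ X : ∀ y ∈ B, x R y}`. -/
def lpolar {X Y : Type*} (R : X → Y → Prop) (B : Set Y) : Set X := {x | ∀ y ∈ B, R x y}

/-- `A ⊆ X` is stable if `A = λ_R (ρ_R A)`. -/
def StableX {X Y : Type*} (R : X → Y → Prop) (A : Set X) : Prop := A = lpolar R (rpolar R A)

/-- `B ⊆ Y` is stable if `B = ρ_R (λ_R B)`. -/
def StableY {X Y : Type*} (R : X → Y → Prop) (B : Set Y) : Prop := B = rpolar R (lpolar R B)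

/-- The quasi-order `≤₁` on `X`. -/
def le1 {X Y : Type*} (R : X → Y → Prop) (x x' : X) : Prop := rpolar R {x} ⊆ rpolar R {x'}

/-- The quasi-order `≤₂` on `Y`. -/
def le2 {X Y : Type*} (R : X → Y → Prop) (y y' : Y) : Prop := lpolar R {y} ⊆ lpolar R {y'}

/-- The operator `f_S` induced on stable sets by `S ⊆ Xⁿ × Y`. -/
def fS {X Y : Type*} {n : ℕ} (R : X → Y → Prop) (S : (Fin n → X) → Y → Prop)
    (A : Fin n → Set X) : Set X :=
  lpolar R {y | ∀ xs : Fin n → X, (∀ i, xs i ∈ A i) → S xs y}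

/-- The dual operator `g_T` induced on stable sets by `T ⊆ X × Yᵐ`. -/
def gT {X Y : Type*} {m : ℕ} (R : X → Y → Prop) (T : X → (Fin m → Y) → Prop)
    (A : Fin m → Set X) : Set X :=
  {x | ∀ ys : Fin m → Y, (∀ i, ys i ∈ rpolar R (A i)) → T x ys}

/-- All sections of `S ⊆ Xⁿ × Y` are stable. -/
def SSectionsStable {X Y : Type*} {n : ℕ} (R : X → Y → Prop)
    (S : (Fin n → X) → Y → Prop) : Prop :=
  (∀ xs : Fin n → X, StableY R {y | S xs y}) ∧
  (∀ (xs : Fin n → X) (i : Fin n) (y : Y), StableX R {x' | S (Function.update xs i x') y})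

/-- All sections of `T ⊆ X × Yᵐ` are stable. -/
def TSectionsStable {X Y : Type*} {m : ℕ} (R : X → Y → Prop)
    (T : X → (Fin m → Y) → Prop) : Prop :=
  (∀ ys : Fin m → Y, StableX R {x | T x ys}) ∧
  (∀ (x : X) (ys : Fin m → Y) (i : Fin m), StableY R {y' | T x (Function.update ys i y')})
/-- A bounded morphism between plain polarities. -/
structure IsPolarityMorphism {X Y X' Y' : Type*} (R : X → Y → Prop) (R' : X' → Y' → Prop)
    (α : X → X') (β : Y → Y') : Prop where
  mono1 : ∀ ⦃x z : X⦄, le1 R x z → le1 R' (α x) (α z)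
  mono2 : ∀ ⦃y w : Y⦄, le2 R y w → le2 R' (β y) (β w)
  backR : ∀ ⦃x : X⦄ ⦃y : Y⦄, R' (α x) (β y) → R x y
  forthR1 : ∀ ⦃x' : X'⦄ ⦃y : Y⦄, (∀ x : X, le1 R' x' (α x) → R x y) → R' x' (β y)
  forthR2 : ∀ ⦃x : X⦄ ⦃y' : Y'⦄, (∀ y : Y, le2 R' y' (β y) → R x y) → R' (α x) y'

/-- A bounded morphism between Ω-polarities. -/
structure IsBddMorphism {X Y X' Y' : Type*} {n m : ℕ}
    (R : X → Y → Prop) (S : (Fin n → X) → Y → Prop) (T : X → (Fin m → Y) → Prop)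
    (R' : X' → Y' → Prop) (S' : (Fin n → X') → Y' → Prop) (T' : X' → (Fin m → Y') → Prop)
    (α : X → X') (β : Y → Y') : Prop where
  mono1 : ∀ ⦃x z : X⦄, le1 R x z → le1 R' (α x) (α z)
  mono2 : ∀ ⦃y w : Y⦄, le2 R y w → le2 R' (β y) (β w)
  backR : ∀ ⦃x : X⦄ ⦃y : Y⦄, R' (α x) (β y) → R x y
  forthR1 : ∀ ⦃x' : X'⦄ ⦃y : Y⦄, (∀ x : X, le1 R' x' (α x) → R x y) → R' x' (β y)
  forthR2 : ∀ ⦃x : X⦄ ⦃y' : Y'⦄, (∀ y : Y, le2 R' y' (β y) → R x y) → R' (α x) y'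
  backS : ∀ ⦃xs : Fin n → X⦄ ⦃y : Y⦄, S' (fun i => α (xs i)) (β y) → S xs y
  forthS : ∀ ⦃xs' : Fin n → X'⦄ ⦃y : Y⦄,
    (∀ xs : Fin n → X, (∀ i, le1 R' (xs' i) (α (xs i))) → S xs y) → S' xs' (β y)
  backT : ∀ ⦃x : X⦄ ⦃ys : Fin m → Y⦄, T' (α x) (fun i => β (ys i)) → T x ys
  forthT : ∀ ⦃x : X⦄ ⦃ys' : Fin m → Y'⦄,
    (∀ ys : Fin m → Y, (∀ i, le2 R' (ys' i) (β (ys i))) → T x ys) → T' (α x) ys'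
/-- A nonempty lattice filter: nonempty, upward closed, closed under binary meets. -/
def IsLatFilter {L : Type*} [Lattice L] (F : Set L) : Prop :=
  F.Nonempty ∧ (∀ ⦃a b : L⦄, a ∈ F → a ≤ b → b ∈ F) ∧ (∀ ⦃a b : L⦄, a ∈ F → b ∈ F → a ⊓ b ∈ F)

/-- A nonempty lattice ideal: nonempty, downward closed, closed under binary joins. -/
def IsLatIdeal {L : Type*} [Lattice L] (D : Set L) : Prop :=
  D.Nonempty ∧ (∀ ⦃a b : L⦄, a ∈ D → b ≤ a → b ∈ D) ∧ (∀ ⦃a b : L⦄, a ∈ D → b ∈ D → a ⊔ b ∈ D)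

/-- The set `𝓕_L` of nonempty filters of `L`. -/
abbrev Filt (L : Type*) [Lattice L] := {F : Set L // IsLatFilter F}

/-- The set `𝓘_L` of nonempty ideals of `L`. -/
abbrev Idl (L : Type*) [Lattice L] := {D : Set L // IsLatIdeal D}

/-- The canonical polarity relation: `F ⋔ D` iff `F ∩ D ≠ ∅`. -/
def canR {L : Type*} [Lattice L] (F : Filt L) (D : Idl L) : Prop := (F.val ∩ D.val).Nonempty

/-- A filter `F` is `D`-maximal if it is maximal (w.r.t. inclusion) among filters
disjoint from the ideal `D`. -/
def DMaximal {L : Type*} [Lattice L] (F : Filt L) (D : Idl L) : Prop :=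
  F.val ∩ D.val = ∅ ∧ ∀ F' : Filt L, F.val ⊆ F'.val → F'.val ∩ D.val = ∅ → F'.val = F.val

/-- A filter is i-maximal if it is `D`-maximal for some ideal `D`. -/
def IMaximal {L : Type*} [Lattice L] (F : Filt L) : Prop := ∃ D : Idl L, DMaximal F D


section AuxStmt19
variable {L : Type*} [Lattice L]

lemma stableX_upward {A : Set (Filt L)} (hA : StableX (canR (L := L)) A)
    {F G : Filt L} (hF : F ∈ A) (hFG : F.val ⊆ G.val) : G ∈ A := by
  rw [hA] at hF ⊢
  intro D hD
  obtain ⟨a, haF, haD⟩ := hF D hD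
  exact ⟨a, hFG haF, haD⟩

lemma stableX_subset_aux {X : Type*}
    (α : X → Filt L)
    (hmax : ∀ F : Filt L, IMaximal F → F ∈ Set.range α)
    (A B : Set (Filt L)) (hA : StableX (canR (L := L)) A)
    (hB : StableX (canR (L := L)) B)
    (hpre : α ⁻¹' A ⊆ α ⁻¹' B) :
    A ⊆ B := by
  intro F hF
  rw [hB]
  intro D hD
  by_contra hFD
  have hdisj : F.val ∩ D.val = ∅ := Set.not_nonempty_iff_eq_empty.1 hFD
  set S : Set (Set L) := {G | IsLatFilter G ∧ F.val ⊆ G ∧ G ∩ D.val = ∅} with hS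
  have hFS : F.val ∈ S := ⟨F.2, subset_rfl, hdisj⟩
  obtain ⟨M, hFM, hMS, hMmax⟩ := by
    refine zorn_subset_nonempty S ?_ F.val hFS
    intro c hcS hchain hcne
    refine ⟨⋃₀ c, ⟨⟨?_, ?_, ?_⟩, ?_, ?_⟩, fun s hs => Set.subset_sUnion_of_mem hs⟩
    · obtain ⟨s, hs⟩ := hcne
      obtain ⟨a, ha⟩ := (hcS hs).1.1
      exact ⟨a, s, hs, ha⟩
    · rintro a b ⟨s, hs, has⟩ hab
      exact ⟨s, hs, (hcS hs).1.2.1 has hab⟩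
    · rintro a b ⟨s, hs, has⟩ ⟨t, ht, hbt⟩
      rcases hchain.total hs ht with hst | hts
      · exact ⟨t, ht, (hcS ht).1.2.2 (hst has) hbt⟩
      · exact ⟨s, hs, (hcS hs).1.2.2 has (hts hbt)⟩
    · obtain ⟨s, hs⟩ := hcne
      exact (hcS hs).2.1.trans (Set.subset_sUnion_of_mem hs)
    · apply Set.eq_empty_iff_forall_notMem.2
      rintro a ⟨⟨s, hs, has⟩, haD⟩
      exact Set.eq_empty_iff_forall_notMem.1 (hcS hs).2.2 a ⟨has, haD⟩
  set G : Filt L := ⟨M, hMS.1⟩ with hG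
  have hGmax : DMaximal G D := by
    refine ⟨hMS.2.2, fun F' hMF' hF'D => ?_⟩
    exact (hMmax ⟨F'.2, hFM.trans hMF', hF'D⟩ hMF').antisymm hMF'
  obtain ⟨x, hx⟩ := hmax G ⟨D, hGmax⟩
  have hGA : G ∈ A := stableX_upward hA hF hFM
  have hxA : x ∈ α ⁻¹' A := by rw [Set.mem_preimage, hx]; exact hGA
  have hGB : G ∈ B := by have := hpre hxA; rwa [Set.mem_preimage, hx] at this
  rw [hB] at hGB
  have : (G.val ∩ D.val).Nonempty := hGB D hD
  rw [show G.val = M from rfl, hGmax.1] at this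
  exact this.ne_empty rfl

end AuxStmt19

/-- If `(α, β)` is a bounded morphism of polarities from `P = (X, Y, R)` to the canonical
polarity of `L` whose `α`-image contains every i-maximal filter, then `A ↦ α⁻¹ A` is
injective on stable subsets of `𝓕_L`. -/
theorem stmt19 {L : Type*} [Lattice L] [BoundedOrder L] {X Y : Type*}
    (R : X → Y → Prop) (α : X → Filt L) (β : Y → Idl L)
    (h : IsPolarityMorphism R (canR (L := L)) α β)
    (hmax : ∀ F : Filt L, IMaximal F → F ∈ Set.range α) :
    ∀ A B : Set (Filt L), StableX (canR (L := L)) A → StableX (canR (L := L)) B →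
      α ⁻¹' A = α ⁻¹' B → A = B := by
  intro A B hA hB hpre
  exact (stableX_subset_aux α hmax A B hA hB hpre.le).antisymm
    (stableX_subset_aux α hmax B A hB hA hpre.ge)
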